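/- Let k be a field of characteristic 2 and let 1 ≤ m < n be positive integers. Let R = k[x_1,…,x_m,y_1,…,y_m] be viewed as a subring of S = k[x_1,…,x_n,y_1,…,y_n], and let 𝔫 = ({x_i, y_i : m+1 ≤ i ≤ n}) ⊆ S. Then for any ideals I and K of R, (I·S + 𝔫^{[2]}) ∩ (K·S + 𝔫^{[2]}) = (I ∩ K)·S + 𝔫^{[2]}, where I·S denotes the extension of I to S. -/

import Mathlib

open MvPolynomial

noncomputable section

namespace BEI

/-- The inclusion of polynomial rings
`k[x_1,…,x_m,y_1,…,y_m] → k[x_1,…,x_n,y_1,…,y_n]` (for `m ≤ n`) sending `x_i ↦ x_i`,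
`y_i ↦ y_i`. -/
def incl (k : Type*) [CommRing k] (m n : ℕ) (h : m ≤ n) :
    MvPolynomial (Fin m ⊕ Fin m) k →+* MvPolynomial (Fin n ⊕ Fin n) k :=
  (rename (Sum.map (Fin.castLE h) (Fin.castLE h))).toRingHom

/-- The Frobenius power `I^{[p]}`, the ideal generated by the `p`-th powers of all
elements of `I`. -/
def frobPow {A : Type*} [CommSemiring A] (I : Ideal A) (p : ℕ) : Ideal A :=
  Ideal.span ((· ^ p) '' (I : Set A))

/-- The ideal `𝔫 = ({x_i, y_i : m+1 ≤ i ≤ n})` of `k[x_1,…,x_n,y_1,…,y_n]`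
(with `0`-based indexing: indices `i` with `m ≤ i`). -/
def nIdeal (k : Type*) [CommRing k] (m n : ℕ) : Ideal (MvPolynomial (Fin n ⊕ Fin n) k) :=
  Ideal.span {g | ∃ i : Fin n, m ≤ (i : ℕ) ∧
    (g = X (Sum.inl i) ∨ g = X (Sum.inr i))}

/-! ### Auxiliary material -/

section core

variable {R : Type*} [CommRing R] {B : Type*}

/-- The ideal generated by the squares of all the variables. -/
def sqIdeal (R : Type*) [CommRing R] (B : Type*) : Ideal (MvPolynomial B R) :=
  Ideal.span (Set.range fun b : B => (X b : MvPolynomial B R) ^ 2)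

lemma coeff_eq_zero_of_mem_sqIdeal {f : MvPolynomial B R} (hf : f ∈ sqIdeal R B)
    {d : B →₀ ℕ} (hd : ∀ b, d b ≤ 1) : coeff d f = 0 := by
  classical
  induction hf using Submodule.span_induction generalizing d with
  | mem g hg =>
    obtain ⟨b, rfl⟩ := hg
    show coeff d ((X b : MvPolynomial B R) ^ 2) = 0
    rw [X_pow_eq_monomial, coeff_monomial, if_neg]
    intro h
    have h2 : (Finsupp.single b 2) b = d b := by rw [h]
    rw [Finsupp.single_eq_same] at h2
    have := hd b
    omega
  | zero => simp
  | add x y hx hy ihx ihy => simp [ihx hd, ihy hd]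
  | smul a x hx ih =>
    rw [smul_eq_mul, coeff_mul]
    refine Finset.sum_eq_zero fun p hp => ?_
    rw [Finset.HasAntidiagonal.mem_antidiagonal] at hp
    have : ∀ b, p.2 b ≤ 1 := by
      intro b
      have : p.1 b + p.2 b = d b := by rw [← hp]; rfl
      have := hd b; omega
    rw [ih this, mul_zero]

lemma mem_sqIdeal_of_coeff {f : MvPolynomial B R}
    (hf : ∀ d : B →₀ ℕ, (∀ b, d b ≤ 1) → coeff d f = 0) : f ∈ sqIdeal R B := by
  classical
  rw [as_sum f]
  refine Ideal.sum_mem _ fun v hv => ?_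
  by_cases hred : ∀ b, v b ≤ 1
  · rw [hf v hred, monomial_zero]; exact Ideal.zero_mem _
  · push_neg at hred
    obtain ⟨b, hb⟩ := hred
    have hble : Finsupp.single b 2 ≤ v := by
      rw [Finsupp.single_le_iff]; omega
    have : monomial v (coeff v f) =
        monomial (v - Finsupp.single b 2) (coeff v f) * (X b : MvPolynomial B R) ^ 2 := by
      rw [X_pow_eq_monomial, monomial_mul, mul_one, tsub_add_cancel_of_le hble]
    rw [this]
    exact Ideal.mul_mem_left _ _ (Ideal.subset_span ⟨b, rfl⟩)

lemma mem_sup_sqIdeal_iff (I : Ideal R) (f : MvPolynomial B R) :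
    f ∈ Ideal.map (C : R →+* MvPolynomial B R) I ⊔ sqIdeal R B ↔
      ∀ d : B →₀ ℕ, (∀ b, d b ≤ 1) → coeff d f ∈ I := by
  classical
  constructor
  · intro hf d hd
    obtain ⟨g, hg, h, hh, rfl⟩ := Submodule.mem_sup.mp hf
    rw [coeff_add, coeff_eq_zero_of_mem_sqIdeal hh hd, add_zero]
    exact mem_map_C_iff.mp hg d
  · intro hf
    set g : MvPolynomial B R :=
      ∑ v ∈ f.support.filter (fun v => ∀ b, v b ≤ 1), monomial v (coeff v f) with hgdef
    have hgc : ∀ d : B →₀ ℕ,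
        coeff d g = if d ∈ f.support.filter (fun v => ∀ b, v b ≤ 1) then coeff d f else 0 := by
      intro d
      rw [hgdef, coeff_sum]
      simp only [coeff_monomial]
      rw [Finset.sum_ite_eq' _ d (fun v => coeff v f)]
    have hg1 : g ∈ Ideal.map (C : R →+* MvPolynomial B R) I := by
      rw [mem_map_C_iff]
      intro d
      rw [hgc d]
      split_ifs with h
      · rw [Finset.mem_filter] at h
        exact hf d h.2
      · exact I.zero_mem
    have hg2 : f - g ∈ sqIdeal R B := by
      refine mem_sqIdeal_of_coeff fun d hd => ?_
      rw [coeff_sub, hgc d]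
      by_cases hs : d ∈ f.support
      · rw [if_pos (Finset.mem_filter.mpr ⟨hs, hd⟩), sub_self]
      · rw [if_neg (fun h => hs (Finset.mem_filter.mp h).1),
          MvPolynomial.notMem_support_iff.mp hs, sub_zero]
    have : f = g + (f - g) := by ring
    rw [this]
    exact Submodule.mem_sup.mpr ⟨g, hg1, f - g, hg2, rfl⟩

lemma core_eq (I K : Ideal R) :
    (Ideal.map (C : R →+* MvPolynomial B R) I ⊔ sqIdeal R B) ⊓
        (Ideal.map (C : R →+* MvPolynomial B R) K ⊔ sqIdeal R B)
      = Ideal.map (C : R →+* MvPolynomial B R) (I ⊓ K) ⊔ sqIdeal R B := by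
  ext f
  rw [Submodule.mem_inf, mem_sup_sqIdeal_iff, mem_sup_sqIdeal_iff, mem_sup_sqIdeal_iff]
  constructor
  · rintro ⟨h1, h2⟩ d hd
    exact Submodule.mem_inf.mpr ⟨h1 d hd, h2 d hd⟩
  · intro h
    exact ⟨fun d hd => (Submodule.mem_inf.mp (h d hd)).1,
      fun d hd => (Submodule.mem_inf.mp (h d hd)).2⟩

end core

lemma frobPow_two_eq_map {A : Type*} [CommRing A] [CharP A 2] (I : Ideal A) :
    frobPow I 2 = Ideal.map (frobenius A 2) I := by
  haveI : Fact (Nat.Prime 2) := ⟨Nat.prime_two⟩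
  show Ideal.span _ = Ideal.span _
  congr 1

section transport

variable {k : Type*} [CommRing k]

/-- The "big" variables: those with index `≥ m`. -/
def BigVar (m n : ℕ) : Type := {v : Fin n ⊕ Fin n // m ≤ Sum.elim Fin.val Fin.val v}

/-- Splitting the variables into big ones and small ones. -/
def varEquiv (m n : ℕ) (h : m ≤ n) :
    (Fin n ⊕ Fin n) ≃ (BigVar m n ⊕ (Fin m ⊕ Fin m)) where
  toFun v :=
    match v with
    | Sum.inl i =>
        if hv : (i : ℕ) < m then Sum.inr (Sum.inl ⟨i, hv⟩)
        else Sum.inl ⟨Sum.inl i, le_of_not_gt hv⟩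
    | Sum.inr i =>
        if hv : (i : ℕ) < m then Sum.inr (Sum.inr ⟨i, hv⟩)
        else Sum.inl ⟨Sum.inr i, le_of_not_gt hv⟩
  invFun w :=
    match w with
    | Sum.inl b => b.1
    | Sum.inr v => Sum.map (Fin.castLE h) (Fin.castLE h) v
  left_inv v := by
    cases v with
    | inl i => by_cases hv : (i : ℕ) < m <;> simp [hv, Fin.castLE]
    | inr i => by_cases hv : (i : ℕ) < m <;> simp [hv, Fin.castLE]
  right_inv w := by
    cases w with
    | inl b =>
      obtain ⟨v, hv⟩ := b
      cases v with
      | inl i =>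
        have : ¬ ((i : ℕ) < m) := not_lt.mpr hv
        simp only [this, dif_neg, not_false_iff]
      | inr i =>
        have : ¬ ((i : ℕ) < m) := not_lt.mpr hv
        simp only [this, dif_neg, not_false_iff]
    | inr v =>
      cases v with
      | inl i => simp [Sum.map, Fin.castLE, i.isLt]
      | inr i => simp [Sum.map, Fin.castLE, i.isLt]

/-- The ring isomorphism `S ≃ R[big variables]`. -/
def Φ (k : Type*) [CommRing k] (m n : ℕ) (h : m ≤ n) :
    MvPolynomial (Fin n ⊕ Fin n) k ≃+*
      MvPolynomial (BigVar m n) (MvPolynomial (Fin m ⊕ Fin m) k) :=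
  ((renameEquiv k (varEquiv m n h)).trans
    (sumAlgEquiv k (BigVar m n) (Fin m ⊕ Fin m))).toRingEquiv

lemma Phi_comp_incl (m n : ℕ) (h : m ≤ n) :
    (Φ k m n h).toRingHom.comp (incl k m n h)
      = (C : MvPolynomial (Fin m ⊕ Fin m) k →+* _) := by
  apply MvPolynomial.ringHom_ext
  · intro r
    simp [incl, Φ, sumAlgEquiv_C_inl, sumAlgEquiv_X_inl, sumAlgEquiv_X_inr]
  · intro v
    cases v with
    | inl i =>
      simp [incl, Φ, varEquiv, sumAlgEquiv_C_inl, sumAlgEquiv_X_inl, sumAlgEquiv_X_inr, Fin.castLE, i.isLt]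
    | inr i =>
      simp [incl, Φ, varEquiv, sumAlgEquiv_C_inl, sumAlgEquiv_X_inl, sumAlgEquiv_X_inr, Fin.castLE, i.isLt]

lemma Phi_X_big (m n : ℕ) (h : m ≤ n) (b : BigVar m n) :
    (Φ k m n h) (X b.1) = X b := by
  obtain ⟨v, hv⟩ := b
  cases v with
  | inl i =>
    have : ¬ ((i : ℕ) < m) := not_lt.mpr hv
    simp [Φ, varEquiv, sumAlgEquiv_C_inl, sumAlgEquiv_X_inl, sumAlgEquiv_X_inr, this]
    exact sumAlgEquiv_X_inl ..
  | inr i =>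
    have : ¬ ((i : ℕ) < m) := not_lt.mpr hv
    simp [Φ, varEquiv, sumAlgEquiv_C_inl, sumAlgEquiv_X_inl, sumAlgEquiv_X_inr, this]
    exact sumAlgEquiv_X_inl ..

lemma map_nIdeal (m n : ℕ) (h : m ≤ n) :
    Ideal.map (Φ k m n h).toRingHom (nIdeal k m n) =
      Ideal.span (Set.range fun b : BigVar m n =>
        (X b : MvPolynomial (BigVar m n) (MvPolynomial (Fin m ⊕ Fin m) k))) := by
  unfold nIdeal
  rw [Ideal.map_span]
  congr 1
  ext g
  constructor
  · rintro ⟨x, ⟨i, hi, hx | hx⟩, rfl⟩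
    · exact ⟨⟨Sum.inl i, hi⟩, by rw [hx]; exact (Phi_X_big m n h ⟨Sum.inl i, hi⟩).symm⟩
    · exact ⟨⟨Sum.inr i, hi⟩, by rw [hx]; exact (Phi_X_big m n h ⟨Sum.inr i, hi⟩).symm⟩
  · rintro ⟨b, rfl⟩
    obtain ⟨v, hv⟩ := b
    cases v with
    | inl i => exact ⟨X (Sum.inl i), ⟨i, hv, Or.inl rfl⟩, Phi_X_big m n h ⟨Sum.inl i, hv⟩⟩
    | inr i => exact ⟨X (Sum.inr i), ⟨i, hv, Or.inr rfl⟩, Phi_X_big m n h ⟨Sum.inr i, hv⟩⟩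

lemma map_frobPow (m n : ℕ) (h : m ≤ n) [CharP k 2] :
    Ideal.map (Φ k m n h).toRingHom (frobPow (nIdeal k m n) 2) =
      sqIdeal (MvPolynomial (Fin m ⊕ Fin m) k) (BigVar m n) := by
  haveI : Fact (Nat.Prime 2) := ⟨Nat.prime_two⟩
  rw [frobPow_two_eq_map, Ideal.map_map]
  have hcomm : (Φ k m n h).toRingHom.comp
      (frobenius (MvPolynomial (Fin n ⊕ Fin n) k) 2)
      = (frobenius (MvPolynomial (BigVar m n) (MvPolynomial (Fin m ⊕ Fin m) k)) 2).comp
        (Φ k m n h).toRingHom := by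
    refine RingHom.ext fun x => ?_
    simp only [RingHom.coe_comp, Function.comp_apply, frobenius_def]
    exact map_pow _ x 2
  rw [hcomm, ← Ideal.map_map, map_nIdeal, Ideal.map_span]
  unfold sqIdeal
  congr 1
  rw [← Set.range_comp]
  ext x
  simp [Function.comp, frobenius_def]

end transport

/-- in characteristic `2`, with `R = k[x_1,…,x_m,y_1,…,y_m] ⊆ S =
k[x_1,…,x_n,y_1,…,y_n]` and `𝔫 = ({x_i, y_i : m+1 ≤ i ≤ n}) ⊆ S`, for any ideals `I, K`
of `R` one has `(IS + 𝔫^{[2]}) ∩ (KS + 𝔫^{[2]}) = (I ∩ K)S + 𝔫^{[2]}`. -/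
theorem distributivity_intersection_with_sum (k : Type*) [Field k] [CharP k 2]
    (m n : ℕ) (hm : 1 ≤ m) (hmn : m < n)
    (I K : Ideal (MvPolynomial (Fin m ⊕ Fin m) k)) :
    (Ideal.map (incl k m n hmn.le) I ⊔ frobPow (nIdeal k m n) 2) ⊓
        (Ideal.map (incl k m n hmn.le) K ⊔ frobPow (nIdeal k m n) 2)
      = Ideal.map (incl k m n hmn.le) (I ⊓ K) ⊔ frobPow (nIdeal k m n) 2 := by
  classical
  set f : MvPolynomial (Fin n ⊕ Fin n) k →+*
      MvPolynomial (BigVar m n) (MvPolynomial (Fin m ⊕ Fin m) k) :=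
    (Φ k m n hmn.le).toRingHom with hf
  have hbij : Function.Bijective f := (Φ k m n hmn.le).bijective
  have hinj : ∀ A B : Ideal (MvPolynomial (Fin n ⊕ Fin n) k),
      Ideal.map f A = Ideal.map f B → A = B := by
    intro A B hAB
    rw [← Ideal.comap_map_of_bijective f hbij (I := A), hAB,
      Ideal.comap_map_of_bijective f hbij]
  apply hinj
  have hmap : ∀ J : Ideal (MvPolynomial (Fin m ⊕ Fin m) k),
      Ideal.map f (Ideal.map (incl k m n hmn.le) J) = Ideal.map C J := by
    intro J
    rw [Ideal.map_map, hf, Phi_comp_incl]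
  have hinf : ∀ A B : Ideal (MvPolynomial (Fin n ⊕ Fin n) k),
      Ideal.map f (A ⊓ B) = Ideal.map f A ⊓ Ideal.map f B := by
    intro A B
    refine le_antisymm (Ideal.map_inf_le f) ?_
    rintro x ⟨hxA, hxB⟩
    obtain ⟨a, haA, rfl⟩ := Ideal.mem_map_iff_of_surjective f hbij.2 |>.mp hxA
    have haB : a ∈ B := by
      have := Ideal.mem_map_of_mem f (Ideal.comap_map_of_bijective f hbij (I := B) ▸
        Ideal.mem_comap.mpr hxB)
      exact Ideal.comap_map_of_bijective f hbij (I := B) ▸ Ideal.mem_comap.mpr hxB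
    exact Ideal.mem_map_of_mem f (Submodule.mem_inf.mpr ⟨haA, haB⟩)
  rw [hinf, Ideal.map_sup, Ideal.map_sup, Ideal.map_sup, hmap, hmap, hmap, hf, map_frobPow]
  exact core_eq I K

end BEI
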